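/- Let P ⊆ ℝ^d be a finite union of closed integral unit cubes and let B(v,I) be a relatively open integral unit cube. If B(v,I) meets the topological interior of P, then B(v,I) is contained in the topological interior of P. -/
import Mathlib


/-- The relatively open integral unit cube `B(v, I)`. -/
def openCube {d : ℕ} (v : Fin d → ℤ) (I : Finset (Fin d)) : Set (Fin d → ℝ) :=
  {x | ∀ i, (i ∈ I → (v i : ℝ) < x i ∧ x i < v i + 1) ∧ (i ∉ I → x i = v i)}

/-- The closed integral unit cube `v + [0,1]^d`. -/
def closedCube {d : ℕ} (v : Fin d → ℤ) : Set (Fin d → ℝ) :=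
  {x | ∀ i, (v i : ℝ) ≤ x i ∧ x i ≤ v i + 1}

/-- If a relatively open integral unit cube meets the topological interior of a
finite union of closed integral unit cubes `P`, then it is contained in the
topological interior of `P`. -/
theorem openCube_subset_interior_of_inter_nonempty (d : ℕ) (S : Finset (Fin d → ℤ))
    (P : Set (Fin d → ℝ)) (hP : P = ⋃ v ∈ S, closedCube v)
    (v : Fin d → ℤ) (I : Finset (Fin d))
    (h : (openCube v I ∩ interior P).Nonempty) :
    openCube v I ⊆ interior P := by
  obtain ⟨x, hxB, hxint⟩ := h
  rw [mem_interior_iff_mem_nhds, Metric.mem_nhds_iff] at hxint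
  obtain ⟨ε, hε, hball⟩ := hxint
  intro y hyB
  set U : Set (Fin d → ℝ) := ⋂ i ∈ I, (fun z => z i) ⁻¹' Set.Ioo (v i : ℝ) (v i + 1) with hU
  have hUopen : IsOpen U := isOpen_biInter_finset fun i _ =>
    isOpen_Ioo.preimage (continuous_apply i)
  have hVopen : IsOpen (U ∩ Metric.ball y ε) := hUopen.inter Metric.isOpen_ball
  have hyV : y ∈ U ∩ Metric.ball y ε := by
    constructor
    · simp only [hU, Set.mem_iInter, Set.mem_preimage, Set.mem_Ioo]
      intro i hi
      exact (hyB i).1 hi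
    · exact Metric.mem_ball_self hε
  have hVP : U ∩ Metric.ball y ε ⊆ P := by
    rintro z ⟨hzU, hzb⟩
    have hzU' : ∀ i ∈ I, (v i : ℝ) < z i ∧ z i < v i + 1 := by
      intro i hi
      exact Set.mem_iInter₂.mp hzU i hi
    set z' : Fin d → ℝ := fun i => if i ∈ I then x i else z i with hz'
    have hz'ball : z' ∈ Metric.ball x ε := by
      rw [Metric.mem_ball, dist_pi_lt_iff hε]
      intro i
      by_cases hi : i ∈ I
      · simp [hz', hi, hε]
      · have h1 : x i = v i := (hxB i).2 hi
        have h2 : y i = v i := (hyB i).2 hi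
        have hle : dist (z i) (y i) ≤ dist z y := dist_le_pi_dist z y i
        simp only [hz', if_neg hi]
        rw [h1, ← h2]
        exact lt_of_le_of_lt hle hzb
    have hz'P := hball hz'ball
    rw [hP] at hz'P ⊢
    obtain ⟨w, hwS, hz'w⟩ := Set.mem_iUnion₂.mp hz'P
    refine Set.mem_iUnion₂.mpr ⟨w, hwS, fun i => ?_⟩
    by_cases hi : i ∈ I
    · have hx1 : (v i : ℝ) < x i ∧ x i < v i + 1 := (hxB i).1 hi
      have hw := hz'w i
      simp only [hz', if_pos hi] at hw
      have hwv : w i = v i := by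
        have ha : (w i : ℝ) < v i + 1 := lt_of_le_of_lt hw.1 hx1.2
        have hb : (v i : ℝ) < w i + 1 := lt_of_lt_of_le hx1.1 hw.2
        have ha' : (w i : ℤ) < v i + 1 := by exact_mod_cast ha
        have hb' : (v i : ℤ) < w i + 1 := by exact_mod_cast hb
        omega
      have hz := hzU' i hi
      rw [hwv]
      exact ⟨le_of_lt hz.1, le_of_lt hz.2⟩
    · have hw := hz'w i
      simp only [hz', if_neg hi] at hw
      exact hw
  exact interior_maximal hVP hVopen hyV
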